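/- Let n ≥ 1, 0 < σ < 1/2, Ω ⊂ ℝⁿ open of finite measure, and for δ > 0 let u_δ be a C¹ function with compact support in Ω satisfying u_δ(x) = 1 whenever dist(x, Ωᶜ) ≥ δ, 0 ≤ u_δ ≤ 1, and |∇u_δ| ≤ C/δ. Then there is a constant C' (depending only on n, σ, C) such that I_Ω[u_δ] ≤ C' δ^(−2σ) |{x ∈ Ω : dist(x, Ωᶜ) < δ}|. -/

import Mathlib

open MeasureTheory Set Metric
open scoped ENNReal

private lemma radial_ball_bound (n : ℕ) (hn : 1 ≤ n) (a : ℝ) (ha : 0 < a + n) :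
    ∃ c : ℝ, 0 < c ∧ ∀ δ : ℝ, 0 < δ →
      ∫⁻ z in ball (0 : EuclideanSpace ℝ (Fin n)) δ, ENNReal.ofReal (‖z‖ ^ a)
        ≤ ENNReal.ofReal c * ENNReal.ofReal (δ ^ (a + n)) := by
  haveI : Nontrivial (EuclideanSpace ℝ (Fin n)) :=
    Module.nontrivial_of_finrank_pos (R := ℝ)
      (by rw [finrank_euclideanSpace_fin]; omega)
  set ω : ℝ≥0∞ := volume (ball (0 : EuclideanSpace ℝ (Fin n)) 1) with hω_def
  have hω : ω ≠ ⊤ := measure_ball_lt_top.ne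
  set m : ℝ := max 1 ((2 : ℝ) ^ (-a)) with hm_def
  have hm0 : (0 : ℝ) < m := lt_of_lt_of_le one_pos (le_max_left _ _)
  set q : ℝ := (2⁻¹ : ℝ) ^ (a + n) with hq_def
  have hq0 : (0 : ℝ) ≤ q := Real.rpow_nonneg (by norm_num) _
  have hq1 : q < 1 := Real.rpow_lt_one (by norm_num) (by norm_num) ha
  have hgeom : (1 - ENNReal.ofReal q)⁻¹ ≠ ⊤ := by
    rw [ENNReal.inv_ne_top]
    exact (tsub_pos_of_lt (by exact_mod_cast ENNReal.ofReal_lt_one.2 hq1)).ne'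
  set K : ℝ≥0∞ := ENNReal.ofReal m * ω * (1 - ENNReal.ofReal q)⁻¹ with hK_def
  have hK : K ≠ ⊤ := ENNReal.mul_ne_top (ENNReal.mul_ne_top ENNReal.ofReal_ne_top hω) hgeom
  refine ⟨K.toReal + 1, by positivity, ?_⟩
  intro δ hδ
  set r : ℕ → ℝ := fun k => δ * (2⁻¹ : ℝ) ^ k with hr_def
  have hr0 : ∀ k, 0 < r k := fun k => by positivity
  have hrS : ∀ k, r (k + 1) = r k * 2⁻¹ := fun k => by
    simp only [hr_def, pow_succ]; ring
  -- covering
  have hcover : ball (0 : EuclideanSpace ℝ (Fin n)) δ \ {0} ⊆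
      ⋃ k, (ball (0 : EuclideanSpace ℝ (Fin n)) (r k) \ ball (0 : EuclideanSpace ℝ (Fin n)) (r (k + 1))) := by
    rintro z ⟨hz, hz0⟩
    have hzn : 0 < ‖z‖ := norm_pos_iff.2 (by simpa using hz0)
    have hzδ : ‖z‖ < δ := mem_ball_zero_iff.1 hz
    have hex : ∃ k, r (k + 1) ≤ ‖z‖ := by
      obtain ⟨k, hk⟩ := exists_pow_lt_of_lt_one (div_pos hzn hδ) (by norm_num : (2⁻¹:ℝ) < 1)
      refine ⟨k, ?_⟩
      have h1 : r (k + 1) ≤ r k := by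
        rw [hrS]; nlinarith [hr0 k]
      have h2 : r k < ‖z‖ := by
        calc r k = δ * (2⁻¹:ℝ)^k := rfl
          _ < δ * (‖z‖/δ) := mul_lt_mul_of_pos_left hk hδ
          _ = ‖z‖ := by field_simp
      exact h1.trans h2.le
    set k0 := Nat.find hex with hk0_def
    have h1 : r (k0 + 1) ≤ ‖z‖ := Nat.find_spec hex
    have h2 : ‖z‖ < r k0 := by
      rcases Nat.eq_zero_or_pos k0 with h | h
      · rw [h]; simpa [hr_def] using hzδ
      · have hlt : k0 - 1 < k0 := by omega
        have := Nat.find_min hex hlt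
        have heq : k0 - 1 + 1 = k0 := by omega
        rw [heq] at this
        exact not_le.1 this
    exact mem_iUnion.2 ⟨k0, mem_ball_zero_iff.2 h2,
      fun hmem => absurd (mem_ball_zero_iff.1 hmem) (not_lt.2 h1)⟩
  -- per-annulus bound
  have hann : ∀ k : ℕ,
      ∫⁻ z in (ball (0 : EuclideanSpace ℝ (Fin n)) (r k) \ ball (0 : EuclideanSpace ℝ (Fin n)) (r (k + 1))), ENNReal.ofReal (‖z‖ ^ a)
        ≤ (ENNReal.ofReal m * ω * ENNReal.ofReal (δ ^ (a + n))) * ENNReal.ofReal q ^ k := by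
    intro k
    have hpt : ∀ z ∈ ball (0 : EuclideanSpace ℝ (Fin n)) (r k) \ ball (0 : EuclideanSpace ℝ (Fin n)) (r (k + 1)),
        ENNReal.ofReal (‖z‖ ^ a) ≤ ENNReal.ofReal (m * r k ^ a) := by
      rintro z ⟨hz1, hz2⟩
      have hzlt : ‖z‖ < r k := mem_ball_zero_iff.1 hz1
      have hzge : r (k + 1) ≤ ‖z‖ := not_lt.1 (fun h => hz2 (mem_ball_zero_iff.2 h))
      apply ENNReal.ofReal_le_ofReal
      rcases le_or_gt 0 a with ha0 | ha0
      · calc ‖z‖ ^ a ≤ r k ^ a := Real.rpow_le_rpow (norm_nonneg z) hzlt.le ha0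
          _ ≤ m * r k ^ a :=
            le_mul_of_one_le_left (Real.rpow_nonneg (hr0 k).le a) (le_max_left _ _)
      · have h1 : ‖z‖ ^ a ≤ r (k + 1) ^ a :=
          Real.rpow_le_rpow_of_nonpos (hr0 (k + 1)) hzge ha0.le
        have h2 : r (k + 1) ^ a = r k ^ a * (2 : ℝ) ^ (-a) := by
          rw [hrS, Real.mul_rpow (hr0 k).le (by norm_num),
            Real.inv_rpow (by norm_num), ← Real.rpow_neg (by norm_num)]
        calc ‖z‖ ^ a ≤ r k ^ a * (2 : ℝ) ^ (-a) := h2 ▸ h1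
          _ ≤ r k ^ a * m :=
            mul_le_mul_of_nonneg_left (le_max_right _ _) (Real.rpow_nonneg (hr0 k).le a)
          _ = m * r k ^ a := mul_comm _ _
    have hreal : m * r k ^ a * r k ^ (n : ℕ) = (m * δ ^ (a + n)) * q ^ k := by
      have h3 : (r k : ℝ) ^ (n : ℕ) = r k ^ ((n : ℕ) : ℝ) := (Real.rpow_natCast _ _).symm
      have h4 : r k ^ a * r k ^ ((n : ℕ) : ℝ) = r k ^ (a + n) :=
        (Real.rpow_add (hr0 k) _ _).symm
      have h5 : r k ^ (a + n) = δ ^ (a + n) * q ^ k := by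
        rw [hr_def]
        rw [Real.mul_rpow hδ.le (by positivity), ← Real.rpow_natCast (2⁻¹ : ℝ) k,
          ← Real.rpow_mul (by norm_num : (0:ℝ) ≤ 2⁻¹), mul_comm (k : ℝ) (a + n),
          Real.rpow_mul (by norm_num : (0:ℝ) ≤ 2⁻¹), Real.rpow_natCast]
      rw [mul_assoc, h3, h4, h5]; ring
    calc ∫⁻ z in (ball (0 : EuclideanSpace ℝ (Fin n)) (r k) \ ball (0 : EuclideanSpace ℝ (Fin n)) (r (k + 1))), ENNReal.ofReal (‖z‖ ^ a)
        ≤ ∫⁻ _ in (ball (0 : EuclideanSpace ℝ (Fin n)) (r k) \ ball (0 : EuclideanSpace ℝ (Fin n)) (r (k + 1))),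
            ENNReal.ofReal (m * r k ^ a) :=
          setLIntegral_mono' (measurableSet_ball.diff measurableSet_ball) hpt
      _ = ENNReal.ofReal (m * r k ^ a) * volume (ball (0 : EuclideanSpace ℝ (Fin n)) (r k) \ ball (0 : EuclideanSpace ℝ (Fin n)) (r (k+1))) :=
          setLIntegral_const _ _
      _ ≤ ENNReal.ofReal (m * r k ^ a) * volume (ball (0 : EuclideanSpace ℝ (Fin n)) (r k)) :=
          mul_le_mul_right (measure_mono diff_subset) _
      _ = ENNReal.ofReal (m * r k ^ a) * (ENNReal.ofReal (r k ^ (n : ℕ)) * ω) := by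
          rw [Measure.addHaar_ball volume 0 (hr0 k).le, finrank_euclideanSpace_fin]
      _ = (ENNReal.ofReal m * ω * ENNReal.ofReal (δ ^ (a + n))) * ENNReal.ofReal q ^ k := by
          rw [← mul_assoc, ← ENNReal.ofReal_mul (by positivity), hreal,
            ENNReal.ofReal_mul (by positivity), ENNReal.ofReal_mul hm0.le,
            ENNReal.ofReal_pow hq0]
          ring
  calc ∫⁻ z in ball (0 : EuclideanSpace ℝ (Fin n)) δ, ENNReal.ofReal (‖z‖ ^ a)
      = ∫⁻ z in ball (0 : EuclideanSpace ℝ (Fin n)) δ \ {0}, ENNReal.ofReal (‖z‖ ^ a) :=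
        (setLIntegral_congr (diff_null_ae_eq_self (measure_singleton 0))).symm
    _ ≤ ∫⁻ z in ⋃ k, (ball (0 : EuclideanSpace ℝ (Fin n)) (r k) \ ball (0 : EuclideanSpace ℝ (Fin n)) (r (k + 1))), ENNReal.ofReal (‖z‖ ^ a) :=
        lintegral_mono_set hcover
    _ ≤ ∑' k, ∫⁻ z in (ball (0 : EuclideanSpace ℝ (Fin n)) (r k) \ ball (0 : EuclideanSpace ℝ (Fin n)) (r (k + 1))),
          ENNReal.ofReal (‖z‖ ^ a) := lintegral_iUnion_le _ _
    _ ≤ ∑' k, (ENNReal.ofReal m * ω * ENNReal.ofReal (δ ^ (a + n))) * ENNReal.ofReal q ^ k :=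
        ENNReal.tsum_le_tsum hann
    _ = (ENNReal.ofReal m * ω * ENNReal.ofReal (δ ^ (a + n))) * (1 - ENNReal.ofReal q)⁻¹ := by
        rw [ENNReal.tsum_mul_left, ENNReal.tsum_geometric]
    _ = K * ENNReal.ofReal (δ ^ (a + n)) := by rw [hK_def]; ring
    _ ≤ ENNReal.ofReal (K.toReal + 1) * ENNReal.ofReal (δ ^ (a + n)) := by
        refine mul_le_mul_left ?_ _
        calc K = ENNReal.ofReal K.toReal := (ENNReal.ofReal_toReal hK).symm
          _ ≤ ENNReal.ofReal (K.toReal + 1) := ENNReal.ofReal_le_ofReal (by linarith)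


private lemma radial_compl_bound (n : ℕ) (hn : 1 ≤ n) (b : ℝ) (hb : b + n < 0) :
    ∃ c : ℝ, 0 < c ∧ ∀ δ : ℝ, 0 < δ →
      ∫⁻ z in (ball (0 : EuclideanSpace ℝ (Fin n)) δ)ᶜ, ENNReal.ofReal (‖z‖ ^ b)
        ≤ ENNReal.ofReal c * ENNReal.ofReal (δ ^ (b + n)) := by
  haveI : Nontrivial (EuclideanSpace ℝ (Fin n)) :=
    Module.nontrivial_of_finrank_pos (R := ℝ)
      (by rw [finrank_euclideanSpace_fin]; omega)
  have hb0 : b < 0 := by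
    have : (0:ℝ) ≤ n := Nat.cast_nonneg n
    linarith
  set ω : ℝ≥0∞ := volume (ball (0 : EuclideanSpace ℝ (Fin n)) 1) with hω_def
  have hω : ω ≠ ⊤ := measure_ball_lt_top.ne
  set q : ℝ := (2 : ℝ) ^ (b + n) with hq_def
  have hq0 : (0 : ℝ) ≤ q := Real.rpow_nonneg (by norm_num) _
  have hq1 : q < 1 := Real.rpow_lt_one_of_one_lt_of_neg (by norm_num) hb
  have hgeom : (1 - ENNReal.ofReal q)⁻¹ ≠ ⊤ := by
    rw [ENNReal.inv_ne_top]
    exact (tsub_pos_of_lt (by exact_mod_cast ENNReal.ofReal_lt_one.2 hq1)).ne'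
  set K : ℝ≥0∞ := ENNReal.ofReal ((2:ℝ) ^ (n : ℕ)) * ω * (1 - ENNReal.ofReal q)⁻¹ with hK_def
  have hK : K ≠ ⊤ := ENNReal.mul_ne_top (ENNReal.mul_ne_top ENNReal.ofReal_ne_top hω) hgeom
  refine ⟨K.toReal + 1, by positivity, ?_⟩
  intro δ hδ
  set R : ℕ → ℝ := fun k => δ * (2 : ℝ) ^ k with hR_def
  have hR0 : ∀ k, 0 < R k := fun k => by positivity
  have hRS : ∀ k, R (k + 1) = 2 * R k := fun k => by
    simp only [hR_def, pow_succ]; ring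
  have hcover : (ball (0 : EuclideanSpace ℝ (Fin n)) δ)ᶜ ⊆
      ⋃ k, (ball (0 : EuclideanSpace ℝ (Fin n)) (R (k + 1)) \
        ball (0 : EuclideanSpace ℝ (Fin n)) (R k)) := by
    intro z hz
    have hzδ : δ ≤ ‖z‖ := by
      have := not_lt.1 fun h => hz (mem_ball_zero_iff.2 h)
      exact this
    have hex : ∃ k, ‖z‖ < R (k + 1) := by
      obtain ⟨k, hk⟩ := pow_unbounded_of_one_lt (‖z‖ / δ) (by norm_num : (1:ℝ) < 2)
      refine ⟨k, ?_⟩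
      have h2 : ‖z‖ < R k := by
        calc ‖z‖ = δ * (‖z‖ / δ) := by field_simp
          _ < δ * (2:ℝ) ^ k := mul_lt_mul_of_pos_left hk hδ
          _ = R k := rfl
      have h3 : R k ≤ R (k + 1) := by rw [hRS]; nlinarith [hR0 k]
      exact h2.trans_le h3
    set k0 := Nat.find hex with hk0_def
    have h1 : ‖z‖ < R (k0 + 1) := Nat.find_spec hex
    have h2 : R k0 ≤ ‖z‖ := by
      rcases Nat.eq_zero_or_pos k0 with h | h
      · rw [h]; simpa [hR_def] using hzδ
      · have hlt : k0 - 1 < k0 := by omega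
        have hmin := Nat.find_min hex hlt
        have heq : k0 - 1 + 1 = k0 := by omega
        rw [heq] at hmin
        exact not_lt.1 hmin
    exact mem_iUnion.2 ⟨k0, mem_ball_zero_iff.2 h1,
      fun hmem => absurd (mem_ball_zero_iff.1 hmem) (not_lt.2 h2)⟩
  have hann : ∀ k : ℕ,
      ∫⁻ z in (ball (0 : EuclideanSpace ℝ (Fin n)) (R (k + 1)) \
          ball (0 : EuclideanSpace ℝ (Fin n)) (R k)), ENNReal.ofReal (‖z‖ ^ b)
        ≤ (ENNReal.ofReal ((2:ℝ) ^ (n : ℕ)) * ω * ENNReal.ofReal (δ ^ (b + n)))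
            * ENNReal.ofReal q ^ k := by
    intro k
    have hpt : ∀ z ∈ ball (0 : EuclideanSpace ℝ (Fin n)) (R (k + 1)) \
        ball (0 : EuclideanSpace ℝ (Fin n)) (R k),
        ENNReal.ofReal (‖z‖ ^ b) ≤ ENNReal.ofReal (R k ^ b) := by
      rintro z ⟨_, hz2⟩
      have hzge : R k ≤ ‖z‖ := not_lt.1 (fun h => hz2 (mem_ball_zero_iff.2 h))
      exact ENNReal.ofReal_le_ofReal
        (Real.rpow_le_rpow_of_nonpos (hR0 k) hzge hb0.le)
    have hreal : R k ^ b * R (k + 1) ^ (n : ℕ) =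
        ((2:ℝ) ^ (n : ℕ) * δ ^ (b + n)) * q ^ k := by
      have h2 : R (k + 1) ^ (n : ℕ) = (2:ℝ) ^ (n : ℕ) * R k ^ (n : ℕ) := by
        rw [hRS, mul_pow]
      have h3 : (R k : ℝ) ^ (n : ℕ) = R k ^ ((n : ℕ) : ℝ) := (Real.rpow_natCast _ _).symm
      have h4 : R k ^ b * R k ^ ((n : ℕ) : ℝ) = R k ^ (b + n) :=
        (Real.rpow_add (hR0 k) _ _).symm
      have h5 : R k ^ (b + n) = δ ^ (b + n) * q ^ k := by
        rw [hR_def]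
        rw [Real.mul_rpow hδ.le (by positivity), ← Real.rpow_natCast (2:ℝ) k,
          ← Real.rpow_mul (by norm_num : (0:ℝ) ≤ 2), mul_comm (k : ℝ) (b + n),
          Real.rpow_mul (by norm_num : (0:ℝ) ≤ 2), Real.rpow_natCast]
      calc R k ^ b * R (k + 1) ^ (n : ℕ)
          = (2:ℝ) ^ (n : ℕ) * (R k ^ b * R k ^ ((n : ℕ) : ℝ)) := by rw [h2, h3]; ring
        _ = (2:ℝ) ^ (n : ℕ) * (δ ^ (b + n) * q ^ k) := by rw [h4, h5]
        _ = ((2:ℝ) ^ (n : ℕ) * δ ^ (b + n)) * q ^ k := by ring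
    calc ∫⁻ z in (ball (0 : EuclideanSpace ℝ (Fin n)) (R (k + 1)) \
            ball (0 : EuclideanSpace ℝ (Fin n)) (R k)), ENNReal.ofReal (‖z‖ ^ b)
        ≤ ∫⁻ _ in (ball (0 : EuclideanSpace ℝ (Fin n)) (R (k + 1)) \
            ball (0 : EuclideanSpace ℝ (Fin n)) (R k)), ENNReal.ofReal (R k ^ b) :=
          setLIntegral_mono' (measurableSet_ball.diff measurableSet_ball) hpt
      _ = ENNReal.ofReal (R k ^ b) * volume (ball (0 : EuclideanSpace ℝ (Fin n)) (R (k + 1)) \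
            ball (0 : EuclideanSpace ℝ (Fin n)) (R k)) := setLIntegral_const _ _
      _ ≤ ENNReal.ofReal (R k ^ b) * volume (ball (0 : EuclideanSpace ℝ (Fin n)) (R (k + 1))) :=
          mul_le_mul_right (measure_mono diff_subset) _
      _ = ENNReal.ofReal (R k ^ b) * (ENNReal.ofReal (R (k + 1) ^ (n : ℕ)) * ω) := by
          rw [Measure.addHaar_ball volume 0 (hR0 (k + 1)).le, finrank_euclideanSpace_fin]
      _ = (ENNReal.ofReal ((2:ℝ) ^ (n : ℕ)) * ω * ENNReal.ofReal (δ ^ (b + n)))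
            * ENNReal.ofReal q ^ k := by
          rw [← mul_assoc, ← ENNReal.ofReal_mul (by positivity), hreal,
            ENNReal.ofReal_mul (by positivity), ENNReal.ofReal_mul (by positivity),
            ENNReal.ofReal_pow hq0]
          ring
  calc ∫⁻ z in (ball (0 : EuclideanSpace ℝ (Fin n)) δ)ᶜ, ENNReal.ofReal (‖z‖ ^ b)
      ≤ ∫⁻ z in ⋃ k, (ball (0 : EuclideanSpace ℝ (Fin n)) (R (k + 1)) \
          ball (0 : EuclideanSpace ℝ (Fin n)) (R k)), ENNReal.ofReal (‖z‖ ^ b) :=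
        lintegral_mono_set hcover
    _ ≤ ∑' k, ∫⁻ z in (ball (0 : EuclideanSpace ℝ (Fin n)) (R (k + 1)) \
          ball (0 : EuclideanSpace ℝ (Fin n)) (R k)), ENNReal.ofReal (‖z‖ ^ b) :=
        lintegral_iUnion_le _ _
    _ ≤ ∑' k, (ENNReal.ofReal ((2:ℝ) ^ (n : ℕ)) * ω * ENNReal.ofReal (δ ^ (b + n)))
          * ENNReal.ofReal q ^ k := ENNReal.tsum_le_tsum hann
    _ = (ENNReal.ofReal ((2:ℝ) ^ (n : ℕ)) * ω * ENNReal.ofReal (δ ^ (b + n)))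
          * (1 - ENNReal.ofReal q)⁻¹ := by
        rw [ENNReal.tsum_mul_left, ENNReal.tsum_geometric]
    _ = K * ENNReal.ofReal (δ ^ (b + n)) := by rw [hK_def]; ring
    _ ≤ ENNReal.ofReal (K.toReal + 1) * ENNReal.ofReal (δ ^ (b + n)) := by
        refine mul_le_mul_left ?_ _
        calc K = ENNReal.ofReal K.toReal := (ENNReal.ofReal_toReal hK).symm
          _ ≤ ENNReal.ofReal (K.toReal + 1) := ENNReal.ofReal_le_ofReal (by linarith)


private lemma sub_preimage_ball (n : ℕ) (x : EuclideanSpace ℝ (Fin n)) (δ : ℝ) :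
    (fun z => x - z) ⁻¹' (ball x δ) = ball (0 : EuclideanSpace ℝ (Fin n)) δ := by
  ext z
  simp [mem_ball, dist_eq_norm, sub_sub_cancel_left]

private lemma lintegral_sub_shift (n : ℕ) (x : EuclideanSpace ℝ (Fin n))
    (s : Set (EuclideanSpace ℝ (Fin n))) (e : ℝ) :
    ∫⁻ y in s, ENNReal.ofReal (‖x - y‖ ^ e) =
      ∫⁻ z in (fun z => x - z) ⁻¹' s, ENNReal.ofReal (‖z‖ ^ e) := by
  have h := (Measure.measurePreserving_sub_left
      (volume : Measure (EuclideanSpace ℝ (Fin n))) x).setLIntegral_comp_preimage_emb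
    (MeasurableEquiv.subLeft x).measurableEmbedding
    (fun y => ENNReal.ofReal (‖x - y‖ ^ e)) s
  simp only [sub_sub_cancel] at h
  exact h.symm

/-- Estimate for the Gagliardo energy of a cutoff function: if `u_δ ∈ C¹_c(Ω)` satisfies
`u_δ = 1` at distance `≥ δ` from `Ωᶜ`, `0 ≤ u_δ ≤ 1` and `|∇u_δ| ≤ C/δ`, then
`I_Ω[u_δ] ≤ C' δ^{-2σ} |{x ∈ Ω : dist(x,Ωᶜ) < δ}|` with `C' = C'(n,σ,C)`. -/
theorem stmt6 (n : ℕ) (hn : 1 ≤ n) (σ C : ℝ) (hσ0 : 0 < σ) (hσ1 : σ < 1 / 2) (hC : 0 < C) :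
    ∃ C' : ℝ, 0 < C' ∧
      ∀ (Ω : Set (EuclideanSpace ℝ (Fin n))), IsOpen Ω → volume Ω ≠ ⊤ →
      ∀ δ : ℝ, 0 < δ →
      ∀ u : EuclideanSpace ℝ (Fin n) → ℝ, ContDiff ℝ 1 u → HasCompactSupport u →
        tsupport u ⊆ Ω →
        (∀ x ∈ Ω, δ ≤ infDist x Ωᶜ → u x = 1) →
        (∀ x, 0 ≤ u x ∧ u x ≤ 1) →
        (∀ x, ‖fderiv ℝ u x‖ ≤ C / δ) →
        (∫⁻ x in Ω, ∫⁻ y in Ω,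
            ENNReal.ofReal ((u x - u y) ^ 2 / ‖x - y‖ ^ ((n : ℝ) + 2 * σ)))
          ≤ ENNReal.ofReal (C' * δ ^ (-(2 * σ))) * volume {x ∈ Ω | infDist x Ωᶜ < δ} := by
  set p : ℝ := (n : ℝ) + 2 * σ with hp
  have hp_pos : 0 < p := by
    have h1 : (0:ℝ) ≤ n := Nat.cast_nonneg n
    rw [hp]; linarith
  have hp2 : (2:ℝ) - p + n = 2 - 2*σ := by rw [hp]; ring
  have hbn : -p + (n:ℝ) = -(2*σ) := by rw [hp]; ring
  obtain ⟨c₁, hc₁, H₁⟩ := radial_ball_bound n hn (2 - p) (by rw [hp2]; linarith)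
  obtain ⟨c₂, hc₂, H₂⟩ := radial_compl_bound n hn (-p) (by rw [hbn]; linarith)
  refine ⟨2 * (C^2 * c₁ + c₂), by positivity, ?_⟩
  intro Ω hΩopen hΩvol δ hδ u hu hucs huts h1 h01 hd
  have hδ0 : δ ≠ 0 := hδ.ne'
  -- measurability of the integrand on the product
  have hu_c : Continuous u := hu.continuous
  have hFm : Measurable (fun q : (EuclideanSpace ℝ (Fin n)) × (EuclideanSpace ℝ (Fin n)) =>
      ENNReal.ofReal ((u q.1 - u q.2) ^ 2 / ‖q.1 - q.2‖ ^ p)) := by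
    have hm1 : Measurable fun q : (EuclideanSpace ℝ (Fin n)) × (EuclideanSpace ℝ (Fin n)) =>
        (u q.1 - u q.2) ^ 2 :=
      (((hu_c.comp continuous_fst).sub (hu_c.comp continuous_snd)).pow 2).measurable
    have hm2 : Measurable fun q : (EuclideanSpace ℝ (Fin n)) × (EuclideanSpace ℝ (Fin n)) =>
        ‖q.1 - q.2‖ ^ p := by fun_prop
    exact (hm1.div hm2).ennreal_ofReal
  -- mean value inequality
  have hMVT : ∀ x y : EuclideanSpace ℝ (Fin n), |u x - u y| ≤ C / δ * ‖x - y‖ := by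
    intro x y
    have h := convex_univ.norm_image_sub_le_of_norm_fderiv_le (𝕜 := ℝ) (f := u)
      (fun z _ => (hu.differentiable one_ne_zero).differentiableAt)
      (fun z _ => hd z) (mem_univ y) (mem_univ x)
    simpa [Real.norm_eq_abs] using h
  -- pointwise estimate near the diagonal
  have hpt1 : ∀ x y : EuclideanSpace ℝ (Fin n),
      ENNReal.ofReal ((u x - u y) ^ 2 / ‖x - y‖ ^ p)
        ≤ ENNReal.ofReal ((C / δ) ^ 2 * ‖x - y‖ ^ (2 - p)) := by
    intro x y
    apply ENNReal.ofReal_le_ofReal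
    rcases eq_or_ne x y with rfl | hxy
    · simp only [sub_self, norm_zero, ne_eq, OfNat.ofNat_ne_zero, not_false_eq_true, zero_pow,
        zero_div]
      positivity
    · have hdpos : (0:ℝ) < ‖x - y‖ := norm_pos_iff.2 (sub_ne_zero.2 hxy)
      have hsq : (u x - u y) ^ 2 ≤ (C / δ) ^ 2 * ‖x - y‖ ^ 2 := by
        have habs : (u x - u y) ^ 2 = |u x - u y| ^ 2 := (sq_abs _).symm
        rw [habs]
        calc |u x - u y| ^ 2 ≤ (C / δ * ‖x - y‖) ^ 2 :=
              pow_le_pow_left₀ (abs_nonneg _) (hMVT x y) 2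
          _ = (C / δ) ^ 2 * ‖x - y‖ ^ 2 := by ring
      have h2 : ‖x - y‖ ^ ((2:ℝ) - p) = ‖x - y‖ ^ 2 / ‖x - y‖ ^ p := by
        rw [Real.rpow_sub hdpos]
        congr 1
        rw [show (2:ℝ) = ((2:ℕ):ℝ) by norm_num, Real.rpow_natCast]
      rw [h2, ← mul_div_assoc]
      gcongr
  -- pointwise estimate away from the diagonal
  have hpt2 : ∀ x y : EuclideanSpace ℝ (Fin n), y ∉ ball x δ →
      ENNReal.ofReal ((u x - u y) ^ 2 / ‖x - y‖ ^ p)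
        ≤ ENNReal.ofReal (‖x - y‖ ^ (-p)) := by
    intro x y hy
    apply ENNReal.ofReal_le_ofReal
    have hδle : δ ≤ ‖x - y‖ := by
      have h := not_lt.1 fun h => hy (mem_ball.2 h)
      rwa [dist_eq_norm, norm_sub_rev] at h
    have hdpos : (0:ℝ) < ‖x - y‖ := lt_of_lt_of_le hδ hδle
    have hsq : (u x - u y) ^ 2 ≤ 1 := by
      obtain ⟨h2, h3⟩ := h01 x; obtain ⟨h4, h5⟩ := h01 y; nlinarith
    rw [Real.rpow_neg hdpos.le, inv_eq_one_div]
    gcongr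
  -- uniform bound on the inner integral
  have hG : ∀ x : EuclideanSpace ℝ (Fin n),
      ∫⁻ y in Ω, ENNReal.ofReal ((u x - u y) ^ 2 / ‖x - y‖ ^ p)
        ≤ ENNReal.ofReal ((C^2 * c₁ + c₂) * δ ^ (-(2*σ))) := by
    intro x
    have part1 : ∫⁻ y in Ω ∩ ball x δ, ENNReal.ofReal ((u x - u y) ^ 2 / ‖x - y‖ ^ p)
        ≤ ENNReal.ofReal (C^2 * c₁ * δ ^ (-(2*σ))) := by
      calc ∫⁻ y in Ω ∩ ball x δ, ENNReal.ofReal ((u x - u y) ^ 2 / ‖x - y‖ ^ p)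
          ≤ ∫⁻ y in ball x δ, ENNReal.ofReal ((u x - u y) ^ 2 / ‖x - y‖ ^ p) :=
            lintegral_mono_set inter_subset_right
        _ ≤ ∫⁻ y in ball x δ, ENNReal.ofReal ((C / δ) ^ 2 * ‖x - y‖ ^ ((2:ℝ) - p)) :=
            lintegral_mono fun y => hpt1 x y
        _ = ENNReal.ofReal ((C / δ) ^ 2) *
              ∫⁻ y in ball x δ, ENNReal.ofReal (‖x - y‖ ^ ((2:ℝ) - p)) := by
            simp_rw [ENNReal.ofReal_mul (by positivity : (0:ℝ) ≤ (C / δ) ^ 2)]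
            rw [lintegral_const_mul' _ _ ENNReal.ofReal_ne_top]
        _ = ENNReal.ofReal ((C / δ) ^ 2) *
              ∫⁻ z in ball (0 : EuclideanSpace ℝ (Fin n)) δ,
                ENNReal.ofReal (‖z‖ ^ ((2:ℝ) - p)) := by
            rw [lintegral_sub_shift n x (ball x δ) (2 - p), sub_preimage_ball]
        _ ≤ ENNReal.ofReal ((C / δ) ^ 2) *
              (ENNReal.ofReal c₁ * ENNReal.ofReal (δ ^ ((2:ℝ) - p + n))) :=
            mul_le_mul_right (H₁ δ hδ) _
        _ = ENNReal.ofReal (C^2 * c₁ * δ ^ (-(2*σ))) := by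
            rw [← ENNReal.ofReal_mul hc₁.le,
              ← ENNReal.ofReal_mul (by positivity : (0:ℝ) ≤ (C / δ) ^ 2)]
            congr 1
            have e1 : δ ^ ((2:ℝ) - 2*σ) = δ ^ 2 * δ ^ (-(2*σ)) := by
              rw [show (2:ℝ) - 2*σ = ((2:ℕ):ℝ) + (-(2*σ)) by push_cast; ring,
                Real.rpow_add hδ, Real.rpow_natCast]
            rw [hp2, e1, div_pow]
            field_simp
    have part2 : ∫⁻ y in Ω \ ball x δ, ENNReal.ofReal ((u x - u y) ^ 2 / ‖x - y‖ ^ p)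
        ≤ ENNReal.ofReal (c₂ * δ ^ (-(2*σ))) := by
      calc ∫⁻ y in Ω \ ball x δ, ENNReal.ofReal ((u x - u y) ^ 2 / ‖x - y‖ ^ p)
          ≤ ∫⁻ y in (ball x δ)ᶜ, ENNReal.ofReal ((u x - u y) ^ 2 / ‖x - y‖ ^ p) :=
            lintegral_mono_set fun y hy => hy.2
        _ ≤ ∫⁻ y in (ball x δ)ᶜ, ENNReal.ofReal (‖x - y‖ ^ (-p)) :=
            setLIntegral_mono' measurableSet_ball.compl fun y hy => hpt2 x y hy
        _ = ∫⁻ z in (ball (0 : EuclideanSpace ℝ (Fin n)) δ)ᶜ,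
              ENNReal.ofReal (‖z‖ ^ (-p)) := by
            rw [lintegral_sub_shift n x (ball x δ)ᶜ (-p), preimage_compl, sub_preimage_ball]
        _ ≤ ENNReal.ofReal c₂ * ENNReal.ofReal (δ ^ (-p + n)) := H₂ δ hδ
        _ = ENNReal.ofReal (c₂ * δ ^ (-(2*σ))) := by
            rw [← ENNReal.ofReal_mul hc₂.le, hbn]
    calc ∫⁻ y in Ω, ENNReal.ofReal ((u x - u y) ^ 2 / ‖x - y‖ ^ p)
        = ∫⁻ y in (Ω ∩ ball x δ) ∪ (Ω \ ball x δ),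
            ENNReal.ofReal ((u x - u y) ^ 2 / ‖x - y‖ ^ p) := by
          rw [inter_union_diff]
      _ ≤ (∫⁻ y in Ω ∩ ball x δ, ENNReal.ofReal ((u x - u y) ^ 2 / ‖x - y‖ ^ p)) +
            ∫⁻ y in Ω \ ball x δ, ENNReal.ofReal ((u x - u y) ^ 2 / ‖x - y‖ ^ p) :=
          lintegral_union_le _ _ _
      _ ≤ ENNReal.ofReal (C^2 * c₁ * δ ^ (-(2*σ))) + ENNReal.ofReal (c₂ * δ ^ (-(2*σ))) :=
          add_le_add part1 part2
      _ = ENNReal.ofReal ((C^2 * c₁ + c₂) * δ ^ (-(2*σ))) := by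
          rw [← ENNReal.ofReal_add (by positivity) (by positivity)]
          congr 1
          ring
  -- the boundary layer
  set A : Set (EuclideanSpace ℝ (Fin n)) := {x ∈ Ω | infDist x Ωᶜ < δ} with hA_def
  have hAsub : A ⊆ Ω := fun x hx => hx.1
  have hAm : MeasurableSet A := by
    have : A = Ω ∩ {x | infDist x Ωᶜ < δ} := rfl
    rw [this]
    exact hΩopen.measurableSet.inter
      (measurableSet_lt (continuous_infDist_pt _).measurable measurable_const)
  have hdm : MeasurableSet (Ω \ A) := hΩopen.measurableSet.diff hAm
  have hone : ∀ x ∈ Ω \ A, u x = 1 := by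
    rintro x ⟨hxΩ, hxA⟩
    exact h1 x hxΩ (not_lt.1 fun hlt => hxA ⟨hxΩ, hlt⟩)
  have hFzero : ∀ x ∈ Ω \ A, ∀ y ∈ Ω \ A,
      ENNReal.ofReal ((u x - u y) ^ 2 / ‖x - y‖ ^ p) = 0 := by
    intro x hx y hy
    rw [hone x hx, hone y hy]
    simp
  have hsymm : ∀ x y : EuclideanSpace ℝ (Fin n),
      ENNReal.ofReal ((u x - u y) ^ 2 / ‖x - y‖ ^ p)
        = ENNReal.ofReal ((u y - u x) ^ 2 / ‖y - x‖ ^ p) := by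
    intro x y
    rw [show (u x - u y) ^ 2 = (u y - u x) ^ 2 by ring, norm_sub_rev]
  have T1 : ∫⁻ x in A, ∫⁻ y in Ω, ENNReal.ofReal ((u x - u y) ^ 2 / ‖x - y‖ ^ p)
      ≤ ENNReal.ofReal ((C^2 * c₁ + c₂) * δ ^ (-(2*σ))) * volume A := by
    calc ∫⁻ x in A, ∫⁻ y in Ω, ENNReal.ofReal ((u x - u y) ^ 2 / ‖x - y‖ ^ p)
        ≤ ∫⁻ _ in A, ENNReal.ofReal ((C^2 * c₁ + c₂) * δ ^ (-(2*σ))) :=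
          setLIntegral_mono' hAm fun x _ => hG x
      _ = ENNReal.ofReal ((C^2 * c₁ + c₂) * δ ^ (-(2*σ))) * volume A := setLIntegral_const _ _
  have T2 : ∫⁻ x in Ω \ A, ∫⁻ y in Ω, ENNReal.ofReal ((u x - u y) ^ 2 / ‖x - y‖ ^ p)
      ≤ ENNReal.ofReal ((C^2 * c₁ + c₂) * δ ^ (-(2*σ))) * volume A := by
    calc ∫⁻ x in Ω \ A, ∫⁻ y in Ω, ENNReal.ofReal ((u x - u y) ^ 2 / ‖x - y‖ ^ p)
        ≤ ∫⁻ x in Ω \ A, ∫⁻ y in A, ENNReal.ofReal ((u x - u y) ^ 2 / ‖x - y‖ ^ p) := by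
          refine setLIntegral_mono' hdm fun x hx => ?_
          calc ∫⁻ y in Ω, ENNReal.ofReal ((u x - u y) ^ 2 / ‖x - y‖ ^ p)
              = ∫⁻ y in A ∪ (Ω \ A), ENNReal.ofReal ((u x - u y) ^ 2 / ‖x - y‖ ^ p) := by
                rw [union_diff_cancel hAsub]
            _ ≤ (∫⁻ y in A, ENNReal.ofReal ((u x - u y) ^ 2 / ‖x - y‖ ^ p)) +
                  ∫⁻ y in Ω \ A, ENNReal.ofReal ((u x - u y) ^ 2 / ‖x - y‖ ^ p) :=
                lintegral_union_le _ _ _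
            _ ≤ (∫⁻ y in A, ENNReal.ofReal ((u x - u y) ^ 2 / ‖x - y‖ ^ p)) + 0 := by
                refine add_le_add_right ?_ _
                calc ∫⁻ y in Ω \ A, ENNReal.ofReal ((u x - u y) ^ 2 / ‖x - y‖ ^ p)
                    ≤ ∫⁻ _ in Ω \ A, (0:ℝ≥0∞) :=
                      setLIntegral_mono' hdm fun y hy => (hFzero x hx y hy).le
                  _ = 0 := by simp
            _ = ∫⁻ y in A, ENNReal.ofReal ((u x - u y) ^ 2 / ‖x - y‖ ^ p) := add_zero _
      _ = ∫⁻ y in A, ∫⁻ x in Ω \ A, ENNReal.ofReal ((u x - u y) ^ 2 / ‖x - y‖ ^ p) :=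
          lintegral_lintegral_swap hFm.aemeasurable
      _ ≤ ∫⁻ y in A, ∫⁻ x in Ω, ENNReal.ofReal ((u x - u y) ^ 2 / ‖x - y‖ ^ p) :=
          setLIntegral_mono' hAm fun y _ => lintegral_mono_set diff_subset
      _ = ∫⁻ y in A, ∫⁻ x in Ω, ENNReal.ofReal ((u y - u x) ^ 2 / ‖y - x‖ ^ p) :=
          lintegral_congr fun y => lintegral_congr fun x => hsymm x y
      _ ≤ ∫⁻ _ in A, ENNReal.ofReal ((C^2 * c₁ + c₂) * δ ^ (-(2*σ))) :=
          setLIntegral_mono' hAm fun y _ => hG y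
      _ = ENNReal.ofReal ((C^2 * c₁ + c₂) * δ ^ (-(2*σ))) * volume A := setLIntegral_const _ _
  calc ∫⁻ x in Ω, ∫⁻ y in Ω, ENNReal.ofReal ((u x - u y) ^ 2 / ‖x - y‖ ^ p)
      = ∫⁻ x in A ∪ (Ω \ A), ∫⁻ y in Ω, ENNReal.ofReal ((u x - u y) ^ 2 / ‖x - y‖ ^ p) := by
        rw [union_diff_cancel hAsub]
    _ ≤ (∫⁻ x in A, ∫⁻ y in Ω, ENNReal.ofReal ((u x - u y) ^ 2 / ‖x - y‖ ^ p)) +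
          ∫⁻ x in Ω \ A, ∫⁻ y in Ω, ENNReal.ofReal ((u x - u y) ^ 2 / ‖x - y‖ ^ p) :=
        lintegral_union_le _ _ _
    _ ≤ ENNReal.ofReal ((C^2 * c₁ + c₂) * δ ^ (-(2*σ))) * volume A +
          ENNReal.ofReal ((C^2 * c₁ + c₂) * δ ^ (-(2*σ))) * volume A := add_le_add T1 T2
    _ = ENNReal.ofReal (2 * (C^2 * c₁ + c₂) * δ ^ (-(2*σ))) * volume A := by
        rw [← two_mul, ← mul_assoc]
        congr 1
        rw [show (2:ℝ≥0∞) = ENNReal.ofReal 2 by norm_num,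
          ← ENNReal.ofReal_mul (by norm_num : (0:ℝ) ≤ 2), ← mul_assoc]
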